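/- Let u_1, ..., u_d be unit vectors spanning R² and ν_1,...,ν_d > 0 with ∑ ν_i u_i = 0. If two convex polygons P and Q in R² both have outward facet unit normals exactly u_1,...,u_d with corresponding edge lengths ν_1,...,ν_d, then Q is a translate of P. -/

import Mathlib

open scoped RealInnerProductSpace
open MeasureTheory

noncomputable section MinkAux

abbrev E2 := EuclideanSpace ℝ (Fin 2)

def Jr (x : E2) : E2 := !₂[-(x 1), x 0]

lemma Jr_apply0 (x : E2) : Jr x 0 = -(x 1) := rfl
lemma Jr_apply1 (x : E2) : Jr x 1 = x 0 := rfl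

lemma inner_E2 (x y : E2) : ⟪x, y⟫ = x 0 * y 0 + x 1 * y 1 := by
  simp [PiLp.inner_apply, Fin.sum_univ_two]; ring

lemma unit_sq {x : E2} (hx : ‖x‖ = 1) : x 0 ^ 2 + x 1 ^ 2 = 1 := by
  have h : ⟪x, x⟫ = (1:ℝ) := by
    rw [real_inner_self_eq_norm_sq, hx]; norm_num
  rw [inner_E2] at h; nlinarith
lemma inner_Jr_self (x : E2) : ⟪Jr x, x⟫ = 0 := by
  simp [inner_E2, Jr_apply0, Jr_apply1]; ring
lemma inner_Jr_antisymm (x y : E2) : ⟪Jr x, y⟫ = -⟪Jr y, x⟫ := by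
  simp [inner_E2, Jr_apply0, Jr_apply1]; ring
lemma inner_Jr_Jr (x y : E2) : ⟪Jr x, Jr y⟫ = ⟪x, y⟫ := by
  simp [inner_E2, Jr_apply0, Jr_apply1]; ring

lemma unit_decomp {u : E2} (hu : ‖u‖ = 1) (x : E2) :
    x = ⟪x, u⟫ • u + ⟪x, Jr u⟫ • Jr u := by
  have h := unit_sq hu
  refine PiLp.ext fun i => ?_
  fin_cases i <;>
    simp only [Fin.mk_zero, Fin.mk_one, inner_E2, Jr_apply0, Jr_apply1, PiLp.add_apply, PiLp.smul_apply, smul_eq_mul]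
  · linear_combination (-(x 0)) * h
  · linear_combination (-(x 1)) * h

lemma unit_parallel {u w : E2} (hu : ‖u‖ = 1) (hw : ‖w‖ = 1)
    (h : ⟪Jr u, w⟫ = 0) : w = u ∨ w = -u := by
  have h' : ⟪w, Jr u⟫ = 0 := by rw [real_inner_comm]; exact h
  have hd := unit_decomp hu w
  rw [h', zero_smul, add_zero] at hd
  have hc : |⟪w, u⟫| = 1 := by
    have : ‖w‖ = ‖⟪w, u⟫ • u‖ := by rw [← hd]
    rw [norm_smul, hu, mul_one, hw] at this
    simpa [Real.norm_eq_abs] using this.symm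
  rcases abs_eq (by norm_num : (0:ℝ) ≤ 1) |>.1 hc with h1 | h1
  · left; rw [hd, h1, one_smul]
  · right; rw [hd, h1, neg_one_smul]


section CycSec
open Real Set

lemma cyc_aux {d : ℕ} {V : Type*} (t : Fin d → ℝ)
    (hb : ∀ i, t i ∈ Set.Ioc (-π) π)
    (next : Fin d → Fin d)
    (h1 : ∀ i, 0 < Real.sin (t (next i) - t i))
    (h2 : ∀ i k, ¬(0 < Real.sin (t k - t i) ∧ 0 < Real.sin (t (next i) - t k)))
    (v : Fin d → V)
    (hv : ∀ i, v (next i) = v i)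
    (hvt : ∀ i k, t i = t k → v i = v k) :
    ∀ i k, v k = v i := by
  have hp : (0:ℝ) < 2 * π := by positivity
  set g : Fin d → Fin d → ℝ := fun i k => toIcoMod hp 0 (t k - t i) with hgdef
  have hg0 : ∀ i k, 0 ≤ g i k ∧ g i k < 2 * π := by
    intro i k
    have := toIcoMod_mem_Ico' hp (t k - t i)
    exact ⟨this.1, this.2⟩
  have hdiff : ∀ i k, ∃ n : ℤ, t k - t i = g i k + n * (2 * π) := by
    intro i k
    refine ⟨toIcoDiv hp 0 (t k - t i), ?_⟩
    have := self_sub_toIcoMod hp 0 (t k - t i)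
    rw [zsmul_eq_mul] at this
    linarith
  have hsin : ∀ i k, Real.sin (t k - t i) = Real.sin (g i k) := by
    intro i k
    obtain ⟨n, hn⟩ := hdiff i k
    rw [hn, Real.sin_add_int_mul_two_pi]
  -- a real in (-(2π), 2π) which is an integer multiple of 2π is 0
  have hsmall : ∀ (x : ℝ), (∃ n : ℤ, x = n * (2*π)) → -(2*π) < x → x < 2*π → x = 0 := by
    rintro x ⟨n, rfl⟩ hlo hhi
    have hn1 : (n:ℝ) < 1 := by nlinarith
    have hn2 : (-1:ℝ) < n := by nlinarith
    have e1 : n < 1 := by exact_mod_cast hn1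
    have e2 : -1 < n := by exact_mod_cast hn2
    have : n = 0 := by omega
    simp [this]
  -- toIcoMod determines t up to nothing (t values lie in a window of width 2π)
  have hEqOfG : ∀ i a b, g i a = g i b → t a = t b := by
    intro i a b hab
    obtain ⟨n, hn⟩ := hdiff i a
    obtain ⟨m, hm⟩ := hdiff i b
    have hx : t a - t b = (n - m : ℤ) * (2*π) := by
      push_cast
      rw [← hab] at hm
      linarith
    have hba := (hb a); have hbb := (hb b)
    have : t a - t b = 0 := by
      refine hsmall _ ⟨n - m, hx⟩ ?_ ?_
      · have := hba.1; have := hbb.2; have := Real.pi_pos; linarith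
      · have := hba.2; have := hbb.1; have := Real.pi_pos; linarith
    linarith
  have hgii : ∀ i, g i i = 0 := by
    intro i
    simp only [hgdef, sub_self]
    exact (toIcoMod_eq_self hp).2 ⟨le_rfl, by simpa using hp⟩
  have hgzero : ∀ i k, g i k = 0 → t k = t i := by
    intro i k h0
    exact hEqOfG i k i (by rw [h0, hgii])
  -- positivity of sin in terms of the gap
  have hpos : ∀ i k, 0 < Real.sin (t k - t i) ↔ (0 < g i k ∧ g i k < π) := by
    intro i k
    rw [hsin i k]
    constructor
    · intro hs
      rcases (hg0 i k).1.lt_or_eq with hlt | heq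
      · constructor
        · exact hlt
        · by_contra hge
          push_neg at hge
          have h1' : 0 ≤ Real.sin (g i k - π) := by
            apply Real.sin_nonneg_of_nonneg_of_le_pi
            · linarith
            · have := (hg0 i k).2; linarith
          rw [Real.sin_sub_pi] at h1'
          linarith
      · rw [← heq] at hs; simp at hs
    · rintro ⟨hl, hr⟩
      exact Real.sin_pos_of_pos_of_lt_pi hl hr
  -- cocycle property
  have hco : ∀ i k l, ∃ n : ℤ, t l - t k = (g i l - g i k) + n * (2*π) := by
    intro i k l
    obtain ⟨n, hn⟩ := hdiff i l
    obtain ⟨m, hm⟩ := hdiff i k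
    exact ⟨n - m, by push_cast; linarith⟩
  have hgsub : ∀ i k l, 0 ≤ g i l - g i k → g k l = g i l - g i k := by
    intro i k l hge
    obtain ⟨n, hn⟩ := hco i k l
    have : g k l = toIcoMod hp 0 (g i l - g i k + n * (2*π)) := by
      simp only [hgdef]; rw [hn]
    rw [this]
    have : toIcoMod hp 0 (g i l - g i k + n * (2*π)) = toIcoMod hp 0 (g i l - g i k) := by
      have := toIcoMod_add_zsmul hp 0 (g i l - g i k) n
      rw [zsmul_eq_mul] at this
      exact this
    rw [this]
    apply (toIcoMod_eq_self hp).2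
    constructor
    · exact hge
    · have := (hg0 i l).2; have := (hg0 i k).1; simp; linarith
  -- minimality of the successor gap
  have hmin : ∀ i k, g i k ≠ 0 → g i (next i) ≤ g i k := by
    intro i k hne
    by_contra hlt
    push_neg at hlt
    have hn1 := (hpos i (next i)).1 (h1 i)
    have hk : 0 < g i k ∧ g i k < π := ⟨(hg0 i k).1.lt_of_ne (Ne.symm hne), lt_trans hlt hn1.2⟩
    have hsk : 0 < Real.sin (t k - t i) := (hpos i k).2 hk
    have hgk : g k (next i) = g i (next i) - g i k := hgsub i k (next i) (by linarith)
    have hsn : 0 < Real.sin (t (next i) - t k) := by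
      apply (hpos k (next i)).2
      rw [hgk]
      constructor <;> linarith [hn1.2, hk.1]
    exact h2 i k ⟨hsk, hsn⟩
  -- main induction
  intro i
  have main : ∀ n (k : Fin d), (Finset.univ.filter (fun j => g i j < g i k)).card ≤ n → v k = v i := by
    intro n
    induction n with
    | zero =>
      intro k hk
      by_cases h0 : g i k = 0
      · exact (hvt i k (hgzero i k h0).symm).symm
      · exfalso
        have hii : g i i = 0 := hgii i
        have : i ∈ Finset.univ.filter (fun j => g i j < g i k) := by
          simp [hii, (hg0 i k).1.lt_of_ne (Ne.symm h0)]
        have := Finset.card_pos.2 ⟨i, this⟩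
        omega
    | succ n IH =>
      intro k hk
      by_cases h0 : g i k = 0
      · exact (hvt i k (hgzero i k h0).symm).symm
      · set F := Finset.univ.filter (fun j => g i j < g i k) with hF
        have hii : g i i = 0 := hgii i
        have hiF : i ∈ F := by
          simp [hF, hii, (hg0 i k).1.lt_of_ne (Ne.symm h0)]
        obtain ⟨m, hmF, hmax⟩ := F.exists_max_image (fun j => g i j) ⟨i, hiF⟩
        have hmk : g i m < g i k := by simpa [hF] using hmF
        have hvm : v m = v i := by
          apply IH m
          have hsub : Finset.univ.filter (fun j => g i j < g i m) ⊂ F := by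
            constructor
            · intro j hj
              simp only [Finset.mem_filter, Finset.mem_univ, true_and] at hj ⊢
              simp only [hF, Finset.mem_filter, Finset.mem_univ, true_and]
              linarith
            · intro hcon
              have : m ∈ Finset.univ.filter (fun j => g i j < g i m) := hcon hmF
              simp at this
          have := Finset.card_lt_card hsub
          omega
        -- show t (next m) = t k
        have hδpos : 0 < g i k - g i m := by linarith
        have hgmk : g m k = g i k - g i m := hgsub i m k (by linarith)
        have hle : g m (next m) ≤ g m k := hmin m k (by rw [hgmk]; linarith)
        have heq : g m (next m) = g m k := by
          rcases hle.lt_or_eq with hlt | he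
          · exfalso
            set x := next m with hx
            have hnx := (hpos m x).1 (h1 m)
            -- g i x = g i m + g m x
            obtain ⟨n1, hn1⟩ := hdiff i m
            obtain ⟨n2, hn2⟩ := hdiff m x
            have hgix : g i x = g i m + g m x := by
              have hsum : t x - t i = (g i m + g m x) + (n1 + n2) * (2*π) := by
                push_cast; linarith
              have : g i x = toIcoMod hp 0 ((g i m + g m x) + (n1 + n2) * (2*π)) := by
                simp only [hgdef]; rw [hsum]
              rw [this]
              have h2' := toIcoMod_add_zsmul hp 0 (g i m + g m x) (n1 + n2)
              rw [zsmul_eq_mul] at h2'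
              push_cast at h2'
              rw [h2']
              apply (toIcoMod_eq_self hp).2
              refine ⟨by linarith [(hg0 i m).1, hnx.1], ?_⟩
              simp only [zero_add]
              have := (hg0 i k).2
              rw [hgmk] at hlt
              linarith
            have hxF : x ∈ F := by
              simp only [hF, Finset.mem_filter, Finset.mem_univ, true_and]
              rw [hgix]
              rw [hgmk] at hlt
              linarith
            have := hmax x hxF
            rw [hgix] at this
            linarith [hnx.1]
          · exact he
        have htnk : t (next m) = t k := hEqOfG m (next m) k heq
        calc v k = v (next m) := hvt (next m) k htnk |>.symm
        _ = v m := hv m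
        _ = v i := hvm
  intro k
  exact main _ k le_rfl

end CycSec

lemma cramer (x y z : E2) : ⟪Jr x, y⟫ • z = ⟪Jr z, y⟫ • x + ⟪Jr x, z⟫ • y := by
  refine PiLp.ext fun i => ?_
  fin_cases i <;>
    simp only [Fin.mk_zero, Fin.mk_one, inner_E2, Jr_apply0, Jr_apply1, PiLp.add_apply,
      PiLp.smul_apply, smul_eq_mul] <;> ring

lemma norm_Jr {u : E2} (hu : ‖u‖ = 1) : ‖Jr u‖ = 1 := by
  have h : ⟪Jr u, Jr u⟫ = 1 := by
    rw [inner_Jr_Jr, real_inner_self_eq_norm_sq, hu]; norm_num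
  rw [real_inner_self_eq_norm_sq] at h
  nlinarith [norm_nonneg (Jr u)]

set_option maxHeartbeats 1000000 in
lemma body_main {d : ℕ} (u : Fin d → E2) (ν : Fin d → ℝ)
    (hu : ∀ i, ‖u i‖ = 1) (hν : ∀ i, 0 < ν i)
    (B : Set E2) (hconv : Convex ℝ B) (hcomp : IsCompact B) (hint : (interior B).Nonempty)
    (fac : Fin d → Set E2)
    (hfac : ∀ i, fac i = {x ∈ B | ⟪x, u i⟫ = sSup ((fun y => ⟪y, u i⟫) '' B)})
    (hbd : frontier B = ⋃ i, fac i)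
    (hlen : ∀ i, (μH[1] : Measure E2) (fac i) = ENNReal.ofReal (ν i)) :
    ∃ (a : Fin d → E2),
      (∀ i, a i ∈ fac i) ∧
      (∀ i j, u i = u j → a i = a j) ∧
      (∀ i, ∀ x ∈ B, ⟪x, u i⟫ ≤ ⟪a i, u i⟫) ∧
      (∀ x, (∀ i, ⟪x, u i⟫ ≤ ⟪a i, u i⟫) → x ∈ B) ∧
      (∀ i, ∃ j, a i + ν i • Jr (u i) = a j ∧ 0 < ⟪Jr (u i), u j⟫ ∧
        ∀ k, ¬(0 < ⟪Jr (u i), u k⟫ ∧ 0 < ⟪Jr (u k), u j⟫)) := by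
  classical
  obtain ⟨p₀, hp₀⟩ := hint
  have hBne : B.Nonempty := ⟨p₀, interior_subset hp₀⟩
  have hBclosed : IsClosed B := hcomp.isClosed
  set h : Fin d → ℝ := fun i => sSup ((fun y => ⟪y, u i⟫) '' B) with hh
  have hcont : ∀ w : E2, Continuous fun y : E2 => ⟪y, w⟫ :=
    fun w => continuous_id.inner continuous_const
  have himg : ∀ i, IsCompact ((fun y => ⟪y, u i⟫) '' B) := fun i => hcomp.image (hcont _)
  have himgne : ∀ i, ((fun y => ⟪y, u i⟫) '' B).Nonempty := fun i => hBne.image _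
  have hle : ∀ i, ∀ x ∈ B, ⟪x, u i⟫ ≤ h i :=
    fun i x hx => le_csSup (himg i).bddAbove ⟨x, hx, rfl⟩
  have hfacmem : ∀ i x, x ∈ fac i ↔ x ∈ B ∧ ⟪x, u i⟫ = h i := by
    intro i x; rw [hfac i]; exact Iff.rfl
  have hfacB : ∀ i, fac i ⊆ B := fun i x hx => ((hfacmem i x).1 hx).1
  have hfacne : ∀ i, (fac i).Nonempty := by
    intro i
    obtain ⟨x, hx, he⟩ := (himg i).sSup_mem (himgne i)
    exact ⟨x, (hfacmem i x).2 ⟨hx, he⟩⟩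
  have hu1 : ∀ i, ⟪u i, u i⟫ = (1:ℝ) := by
    intro i; rw [real_inner_self_eq_norm_sq, hu]; norm_num
  have huJ : ∀ i, ⟪u i, Jr (u i)⟫ = (0:ℝ) := by
    intro i; rw [real_inner_comm]; exact inner_Jr_self _
  have hJu : ∀ i, ⟪Jr (u i), u i⟫ = (0:ℝ) := fun i => inner_Jr_self _
  have hJJ : ∀ i, ⟪Jr (u i), Jr (u i)⟫ = (1:ℝ) := by
    intro i; rw [inner_Jr_Jr]; exact hu1 i
  have hstrict : ∀ i, ∀ p ∈ interior B, ⟪p, u i⟫ < h i := by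
    intro i p hp
    obtain ⟨ε, hε, hball⟩ := Metric.isOpen_iff.1 isOpen_interior p hp
    have hq : p + (ε/2) • u i ∈ B := by
      apply interior_subset
      apply hball
      rw [Metric.mem_ball, dist_eq_norm, add_sub_cancel_left, norm_smul, hu, mul_one,
        Real.norm_eq_abs, abs_of_pos (by linarith)]
      linarith
    have h2 := hle i _ hq
    rw [inner_add_left, real_inner_smul_left, hu1] at h2
    linarith
  have hflat : ∀ i j, u j = -u i → ∀ x, x ∈ fac i → x ∈ fac j → False := by
    intro i j hji x hxi hxj
    have h1 := hstrict i p₀ hp₀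
    have h2 := hstrict j p₀ hp₀
    have e1 : ⟪x, u i⟫ = h i := ((hfacmem i x).1 hxi).2
    have e2 : ⟪x, u j⟫ = h j := ((hfacmem j x).1 hxj).2
    have hxB : x ∈ B := hfacB i hxi
    have e3 : ⟪x, u j⟫ = -⟪x, u i⟫ := by rw [hji, inner_neg_right]
    have e4 : ⟪p₀, u j⟫ = -⟪p₀, u i⟫ := by rw [hji, inner_neg_right]
    have h5 := hle i p₀ (interior_subset hp₀)
    linarith
  set gg : Fin d → E2 → ℝ := fun i x => ⟪x, Jr (u i)⟫ with hgg
  have hfaccomp : ∀ i, IsCompact (fac i) := by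
    intro i
    have : fac i = B ∩ {x | ⟪x, u i⟫ = h i} := by
      ext x; rw [hfacmem i x]; exact Iff.rfl
    rw [this]
    exact hcomp.inter_right (isClosed_eq (hcont _) continuous_const)
  have hfacconv : ∀ i, Convex ℝ (fac i) := by
    intro i
    intro x hx y hy α β hα hβ hαβ
    rw [hfacmem] at hx hy ⊢
    constructor
    · exact hconv hx.1 hy.1 hα hβ hαβ
    · rw [inner_add_left, real_inner_smul_left, real_inner_smul_left, hx.2, hy.2]
      ring_nf
      linear_combination (hαβ) * h i
  set K : Fin d → Set ℝ := fun i => gg i '' fac i with hK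
  have hKcomp : ∀ i, IsCompact (K i) := by
    intro i
    exact (hfaccomp i).image (hcont _)
  have hKne : ∀ i, (K i).Nonempty := fun i => (hfacne i).image _
  have hKconv : ∀ i, Convex ℝ (K i) := by
    rintro i r1 ⟨x1, hx1, rfl⟩ r2 ⟨x2, hx2, rfl⟩ α β hα hβ hαβ
    refine ⟨α • x1 + β • x2, hfacconv i hx1 hx2 hα hβ hαβ, ?_⟩
    simp only [hgg, inner_add_left, real_inner_smul_left, smul_eq_mul]
  set ss : Fin d → ℝ := fun i => sInf (K i) with hss
  set tt : Fin d → ℝ := fun i => sSup (K i) with htt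
  have hssK : ∀ i, ss i ∈ K i := fun i => (hKcomp i).sInf_mem (hKne i)
  have httK : ∀ i, tt i ∈ K i := fun i => (hKcomp i).sSup_mem (hKne i)
  have hss_le : ∀ i, ∀ x ∈ fac i, ss i ≤ gg i x :=
    fun i x hx => csInf_le (hKcomp i).bddBelow ⟨x, hx, rfl⟩
  have hle_tt : ∀ i, ∀ x ∈ fac i, gg i x ≤ tt i :=
    fun i x hx => le_csSup (hKcomp i).bddAbove ⟨x, hx, rfl⟩
  have hKIcc : ∀ i, K i = Set.Icc (ss i) (tt i) := by
    intro i
    apply Set.Subset.antisymm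
    · rintro r ⟨x, hx, rfl⟩
      exact ⟨hss_le i x hx, hle_tt i x hx⟩
    · intro r hr
      exact ((hKconv i).ordConnected).out (hssK i) (httK i) hr
  have hdecomp : ∀ i, ∀ x ∈ fac i, x = h i • u i + gg i x • Jr (u i) := by
    intro i x hx
    have := unit_decomp (hu i) x
    rwa [((hfacmem i x).1 hx).2] at this
  set a : Fin d → E2 := fun i => h i • u i + ss i • Jr (u i) with ha
  set b : Fin d → E2 := fun i => h i • u i + tt i • Jr (u i) with hb
  have ha_mem : ∀ i, a i ∈ fac i := by
    intro i
    obtain ⟨x, hx, he⟩ := hssK i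
    have := hdecomp i x hx
    rw [he] at this
    rw [ha]; simpa [← this] using hx
  have hb_mem : ∀ i, b i ∈ fac i := by
    intro i
    obtain ⟨x, hx, he⟩ := httK i
    have := hdecomp i x hx
    rw [he] at this
    rw [hb]; simpa [← this] using hx
  have hau : ∀ i, ⟪a i, u i⟫ = h i := fun i => ((hfacmem i _).1 (ha_mem i)).2
  have hbu : ∀ i, ⟪b i, u i⟫ = h i := fun i => ((hfacmem i _).1 (hb_mem i)).2
  have hgga : ∀ i, gg i (a i) = ss i := by
    intro i
    simp only [hgg, ha, inner_add_left, real_inner_smul_left, huJ, hJJ, mul_zero, mul_one,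
      zero_add]
  have hggb : ∀ i, gg i (b i) = tt i := by
    intro i
    simp only [hgg, hb, inner_add_left, real_inner_smul_left, huJ, hJJ, mul_zero, mul_one,
      zero_add]
  -- the facet is a parametrized segment
  have hfacIm : ∀ i, fac i = (fun r : ℝ => h i • u i + r • Jr (u i)) '' Set.Icc (ss i) (tt i) := by
    intro i
    apply Set.Subset.antisymm
    · intro x hx
      refine ⟨gg i x, ?_, (hdecomp i x hx).symm⟩
      rw [← hKIcc i]; exact ⟨x, hx, rfl⟩
    · rintro _ ⟨r, hr, rfl⟩
      rw [← hKIcc i] at hr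
      obtain ⟨x, hx, he⟩ := hr
      have := hdecomp i x hx
      rw [he] at this
      show h i • u i + r • Jr (u i) ∈ fac i
      rw [← this]; exact hx
  have htt_ss : ∀ i, tt i - ss i = ν i := by
    intro i
    have hiso : Isometry (fun r : ℝ => h i • u i + r • Jr (u i)) := by
      apply Isometry.of_dist_eq
      intro r1 r2
      rw [dist_eq_norm, dist_eq_norm]
      have : (h i • u i + r1 • Jr (u i)) - (h i • u i + r2 • Jr (u i))
          = (r1 - r2) • Jr (u i) := by
        rw [sub_smul]; abel
      rw [this, norm_smul, norm_Jr (hu i), mul_one]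
    have hm := hlen i
    rw [hfacIm i, hiso.hausdorffMeasure_image (Or.inl one_pos.le)] at hm
    rw [MeasureTheory.hausdorffMeasure_real, Real.volume_Icc] at hm
    have hst : ss i ≤ tt i := by
      have := hss_le i (b i) (hb_mem i)
      rw [hggb] at this; exact this
    rw [ENNReal.ofReal_eq_ofReal_iff (by linarith) (hν i).le] at hm
    exact hm
  have hba : ∀ i, b i = a i + ν i • Jr (u i) := by
    intro i
    show h i • u i + tt i • Jr (u i) = (h i • u i + ss i • Jr (u i)) + ν i • Jr (u i)
    rw [← htt_ss i, sub_smul, add_add_sub_cancel]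
  -- half-space representation
  have hhalf : ∀ x, (∀ i, ⟪x, u i⟫ ≤ h i) → x ∈ B := by
    intro x hx
    by_contra hxB
    set f : ℝ → E2 := fun s => p₀ + s • (x - p₀) with hf
    have hfc : Continuous f := by
      apply continuous_const.add
      exact continuous_id.smul continuous_const
    set S : Set ℝ := Set.Icc 0 1 ∩ f ⁻¹' B with hS
    have hScomp : IsCompact S :=
      isCompact_Icc.inter_right (hBclosed.preimage hfc)
    have hS0 : (0:ℝ) ∈ S := by
      constructor
      · exact ⟨le_rfl, zero_le_one⟩
      · simp only [hf, Set.mem_preimage, zero_smul, add_zero]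
        exact interior_subset hp₀
    set τ := sSup S with hτ
    have hτS : τ ∈ S := hScomp.sSup_mem ⟨0, hS0⟩
    have hτub : ∀ s ∈ S, s ≤ τ := fun s hs => le_csSup hScomp.bddAbove hs
    have hyB : f τ ∈ B := hτS.2
    have hτ1 : τ ≠ 1 := by
      intro he
      apply hxB
      have : f 1 = x := by simp [hf]
      rw [← this, ← he]; exact hyB
    have hτlt : τ < 1 := lt_of_le_of_ne hτS.1.2 hτ1
    have hynotint : f τ ∉ interior B := by
      intro hyint
      obtain ⟨ε, hε, hball⟩ := Metric.isOpen_iff.1 isOpen_interior _ hyint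
      set δ : ℝ := min ((ε/2)/(‖x - p₀‖+1)) (1 - τ) with hδ
      have hδpos : 0 < δ := by
        apply lt_min
        · positivity
        · linarith
      have hmem : f (τ + δ) ∈ Metric.ball (f τ) ε := by
        rw [Metric.mem_ball, dist_eq_norm]
        have : f (τ + δ) - f τ = δ • (x - p₀) := by
          simp only [hf, add_smul]; abel
        rw [this, norm_smul, Real.norm_eq_abs, abs_of_pos hδpos]
        have h1 : δ ≤ (ε/2)/(‖x - p₀‖+1) := min_le_left _ _
        have h2 : ‖x - p₀‖ + 1 > 0 := by positivity
        calc δ * ‖x - p₀‖ ≤ ((ε/2)/(‖x - p₀‖+1)) * (‖x - p₀‖+1) := by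
              apply mul_le_mul h1 (by linarith) (norm_nonneg _) (by positivity)
        _ = ε/2 := div_mul_cancel₀ _ (by positivity)
        _ < ε := by linarith
      have : τ + δ ∈ S := by
        constructor
        · constructor
          · linarith [hτS.1.1]
          · have := min_le_right ((ε/2)/(‖x - p₀‖+1)) (1 - τ); linarith
        · show f (τ + δ) ∈ B
          exact interior_subset (hball hmem)
      have := hτub _ this
      linarith
    have hyfr : f τ ∈ ⋃ i, fac i := by
      rw [← hbd, hBclosed.frontier_eq]
      exact ⟨hyB, hynotint⟩
    obtain ⟨si, ⟨j, rfl⟩, hyj⟩ := hyfr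
    have hyu : ⟪f τ, u j⟫ = h j := ((hfacmem j _).1 hyj).2
    have hpj : ⟪p₀, u j⟫ < h j := hstrict j p₀ hp₀
    have hτ0 : τ ≠ 0 := by
      intro he
      apply hynotint
      have : f τ = p₀ := by simp [hf, he]
      rw [this]; exact hp₀
    have hτpos : 0 < τ := lt_of_le_of_ne hτS.1.1 (Ne.symm hτ0)
    have e1 : ⟪f τ, u j⟫ = ⟪p₀, u j⟫ + τ * ⟪x - p₀, u j⟫ := by
      show ⟪p₀ + τ • (x - p₀), u j⟫ = _
      rw [inner_add_left, real_inner_smul_left]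
    set c : ℝ := ⟪x - p₀, u j⟫ with hc
    have e2 : τ * c = h j - ⟪p₀, u j⟫ := by rw [← hyu, e1]; ring
    have hcpos : 0 < c := by
      rcases lt_trichotomy c 0 with hlt | he | hgt
      · nlinarith
      · rw [he] at e2; nlinarith
      · exact hgt
    have e3 : ⟪x, u j⟫ = ⟪p₀, u j⟫ + c := by
      rw [hc, inner_sub_left]; ring
    have hcon := hx j
    nlinarith
  -- interior points of an edge belong to no other facet
  have hL1 : ∀ i j x, x ∈ fac i → x ∈ fac j → u j ≠ u i →
      gg i x = ss i ∨ gg i x = tt i := by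
    intro i j x hxi hxj hne
    by_contra hcon
    push_neg at hcon
    have hs1 : ss i < gg i x := (hss_le i x hxi).lt_of_ne (Ne.symm hcon.1)
    have hs2 : gg i x < tt i := (hle_tt i x hxi).lt_of_ne hcon.2
    set ε : ℝ := min (gg i x - ss i) (tt i - gg i x) with hε
    have hεpos : 0 < ε := lt_min (by linarith) (by linarith)
    have hy1 : x + ε • Jr (u i) ∈ fac i := by
      rw [hfacIm i]
      refine ⟨gg i x + ε, ⟨?_, ?_⟩, ?_⟩
      · linarith [hεpos]
      · have := min_le_right (gg i x - ss i) (tt i - gg i x); linarith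
      · show h i • u i + (gg i x + ε) • Jr (u i) = x + ε • Jr (u i)
        rw [add_smul, ← add_assoc, ← hdecomp i x hxi]
    have hy2 : x - ε • Jr (u i) ∈ fac i := by
      rw [hfacIm i]
      refine ⟨gg i x - ε, ⟨?_, ?_⟩, ?_⟩
      · have := min_le_left (gg i x - ss i) (tt i - gg i x); linarith
      · linarith [hεpos]
      · show h i • u i + (gg i x - ε) • Jr (u i) = x - ε • Jr (u i)
        rw [sub_smul]
        rw [show h i • u i + (gg i x • Jr (u i) - ε • Jr (u i)) =
          (h i • u i + gg i x • Jr (u i)) - ε • Jr (u i) by abel, ← hdecomp i x hxi]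
    have hxuj : ⟪x, u j⟫ = h j := ((hfacmem j x).1 hxj).2
    have hb1 := hle j _ (hfacB i hy1)
    have hb2 := hle j _ (hfacB i hy2)
    rw [inner_add_left, real_inner_smul_left, hxuj] at hb1
    rw [inner_sub_left, real_inner_smul_left, hxuj] at hb2
    have hz : ⟪Jr (u i), u j⟫ = 0 := by nlinarith
    rcases unit_parallel (hu i) (hu j) hz with hcase | hcase
    · exact hne hcase
    · exact hflat i j hcase x hxi hxj
  have hL2 : ∀ i j, u j ≠ u i → b i ∈ fac j → b i = a j := by
    intro i j hne hbij
    rcases hL1 j i (b i) hbij (hb_mem i) (Ne.symm hne) with hcase | hcase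
    · have := hdecomp j (b i) hbij
      rw [hcase] at this
      rw [this, ha]
    · exfalso
      have hbb : b i = b j := by
        have := hdecomp j (b i) hbij
        rw [hcase] at this
        rw [this, hb]
      have h1 : ⟪a i, u j⟫ ≤ h j := hle j _ (hfacB i (ha_mem i))
      have h2 : ⟪a j, u i⟫ ≤ h i := hle i _ (hfacB j (ha_mem j))
      have e1 : ⟪b i, u j⟫ = h j := ((hfacmem j _).1 hbij).2
      have e2 : ⟪b i, u i⟫ = h i := hbu i
      have d1 : ⟪b i - a i, u j⟫ ≥ 0 := by rw [inner_sub_left]; linarith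
      have d2 : ⟪b j - a j, u i⟫ ≥ 0 := by
        rw [inner_sub_left, ← hbb]; linarith
      rw [hba i, add_sub_cancel_left, real_inner_smul_left] at d1
      rw [hba j, add_sub_cancel_left, real_inner_smul_left] at d2
      have p1 : 0 ≤ ⟪Jr (u i), u j⟫ := nonneg_of_mul_nonneg_right d1 (hν i)
      have p2 : 0 ≤ ⟪Jr (u j), u i⟫ := nonneg_of_mul_nonneg_right d2 (hν j)
      rw [inner_Jr_antisymm] at p2
      have hz : ⟪Jr (u i), u j⟫ = 0 := le_antisymm (by linarith) p1
      rcases unit_parallel (hu i) (hu j) hz with hcase2 | hcase2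
      · exact hne hcase2
      · exact hflat i j hcase2 (b i) (hb_mem i) hbij
  have hpos5 : ∀ i j, u j ≠ u i → b i ∈ fac j → 0 < ⟪Jr (u i), u j⟫ := by
    intro i j hne hbij
    have h1 : ⟪a i, u j⟫ ≤ h j := hle j _ (hfacB i (ha_mem i))
    have e1 : ⟪b i, u j⟫ = h j := ((hfacmem j _).1 hbij).2
    have d1 : ⟪b i - a i, u j⟫ ≥ 0 := by rw [inner_sub_left]; linarith
    rw [hba i, add_sub_cancel_left, real_inner_smul_left] at d1
    have p1 : 0 ≤ ⟪Jr (u i), u j⟫ := nonneg_of_mul_nonneg_right d1 (hν i)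
    rcases p1.lt_or_eq with hlt | he
    · exact hlt
    · exfalso
      rcases unit_parallel (hu i) (hu j) he.symm with hcase | hcase
      · exact hne hcase
      · exact hflat i j hcase (b i) (hb_mem i) hbij
  have hL3 : ∀ i, ∃ j, u j ≠ u i ∧ b i ∈ fac j := by
    intro i
    by_contra hcon
    push_neg at hcon
    have hbiB : b i ∈ B := hfacB i (hb_mem i)
    have hcj : ∀ j, u j ≠ u i → ⟪b i, u j⟫ < h j := by
      intro j hne
      have h1 := hle j _ hbiB
      rcases h1.lt_or_eq with hlt | he
      · exact hlt
      · exact absurd ((hfacmem j _).2 ⟨hbiB, he⟩) (hcon j hne)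
    set F : Finset (Fin d) := Finset.univ.filter (fun j => u j ≠ u i) with hF
    set T : Finset ℝ :=
      insert 1 (F.image (fun j => (h j - ⟪b i, u j⟫) / (1 + |⟪Jr (u i), u j⟫|))) with hT
    have hTne : T.Nonempty := ⟨1, Finset.mem_insert_self _ _⟩
    set τ := T.min' hTne with hτ
    have hτpos : 0 < τ := by
      apply (Finset.lt_min'_iff T hTne).2
      intro y hy
      rcases Finset.mem_insert.1 hy with rfl | hy
      · norm_num
      · obtain ⟨j, hjF, rfl⟩ := Finset.mem_image.1 hy
        have hjne : u j ≠ u i := by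
          simpa [hF] using hjF
        have := hcj j hjne
        apply div_pos (by linarith) (by positivity)
    set x' : E2 := b i + τ • Jr (u i) with hx'
    have hx'B : x' ∈ B := by
      apply hhalf
      intro j
      by_cases hj : u j = u i
      · have : h j = h i := by simp only [hh]; rw [hj]
        rw [this, hx', inner_add_left, real_inner_smul_left, hj, hJu, mul_zero, add_zero,
          hbu i]
      · have hjF : j ∈ F := by simp [hF, hj]
        have hτle : τ ≤ (h j - ⟪b i, u j⟫) / (1 + |⟪Jr (u i), u j⟫|) :=
          Finset.min'_le T _ (Finset.mem_insert_of_mem (Finset.mem_image_of_mem _ hjF))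
        have habs : 0 < 1 + |⟪Jr (u i), u j⟫| := by positivity
        have h2 : τ * (1 + |⟪Jr (u i), u j⟫|) ≤ h j - ⟪b i, u j⟫ := by
          calc τ * (1 + |⟪Jr (u i), u j⟫|) ≤
              ((h j - ⟪b i, u j⟫) / (1 + |⟪Jr (u i), u j⟫|)) * (1 + |⟪Jr (u i), u j⟫|) := by
                apply mul_le_mul_of_nonneg_right hτle habs.le
          _ = h j - ⟪b i, u j⟫ := div_mul_cancel₀ _ (by positivity)
        have h3 : τ * ⟪Jr (u i), u j⟫ ≤ τ * (1 + |⟪Jr (u i), u j⟫|) := by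
          apply mul_le_mul_of_nonneg_left _ hτpos.le
          have := le_abs_self ⟪Jr (u i), u j⟫
          linarith
        rw [hx', inner_add_left, real_inner_smul_left]
        linarith
    have hx'fac : x' ∈ fac i := by
      apply (hfacmem i x').2
      refine ⟨hx'B, ?_⟩
      rw [hx', inner_add_left, real_inner_smul_left, hJu, mul_zero, add_zero, hbu i]
    have := hle_tt i x' hx'fac
    have hgx' : gg i x' = tt i + τ := by
      have he : gg i x' = gg i (b i) + τ * ⟪Jr (u i), Jr (u i)⟫ := by
        simp only [hgg, hx', inner_add_left, real_inner_smul_left]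
      rw [he, hggb i, hJJ, mul_one]
    rw [hgx'] at this
    linarith
  have hL4 : ∀ i j k, u j ≠ u i → u k ≠ u i → b i ∈ fac j → b i ∈ fac k → u j = u k := by
    intro i j k hji hki hbij hbik
    by_contra hjk
    have haj : b i = a j := hL2 i j hji hbij
    have hak : b i = a k := hL2 i k hki hbik
    have h1 : ⟪b j, u k⟫ ≤ h k := hle k _ (hfacB j (hb_mem j))
    have h2 : ⟪b k, u j⟫ ≤ h j := hle j _ (hfacB k (hb_mem k))
    have e1 : ⟪b i, u k⟫ = h k := ((hfacmem k _).1 hbik).2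
    have e2 : ⟪b i, u j⟫ = h j := ((hfacmem j _).1 hbij).2
    have d1 : ⟪b j - a j, u k⟫ ≤ 0 := by
      rw [inner_sub_left, ← haj]; linarith
    have d2 : ⟪b k - a k, u j⟫ ≤ 0 := by
      rw [inner_sub_left, ← hak]; linarith
    rw [hba j, add_sub_cancel_left, real_inner_smul_left] at d1
    rw [hba k, add_sub_cancel_left, real_inner_smul_left] at d2
    have p1 : ⟪Jr (u j), u k⟫ ≤ 0 := nonpos_of_mul_nonpos_right d1 (hν j)
    have p2 : ⟪Jr (u k), u j⟫ ≤ 0 := nonpos_of_mul_nonpos_right d2 (hν k)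
    rw [inner_Jr_antisymm] at p2
    have hz : ⟪Jr (u j), u k⟫ = 0 := le_antisymm p1 (by linarith)
    rcases unit_parallel (hu j) (hu k) hz with hcase | hcase
    · exact hjk hcase.symm
    · exact hflat j k hcase (b i) hbij hbik
  have hnb : ∀ i j, u j ≠ u i → b i ∈ fac j →
      ∀ k, ¬(0 < ⟪Jr (u i), u k⟫ ∧ 0 < ⟪Jr (u k), u j⟫) := by
    rintro i j hji hbij k ⟨hik, hkj⟩
    have hD : 0 < ⟪Jr (u i), u j⟫ := hpos5 i j hji hbij
    have hbiB : b i ∈ B := hfacB i (hb_mem i)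
    have e1 : ⟪b i, u i⟫ = h i := hbu i
    have e2 : ⟪b i, u j⟫ = h j := ((hfacmem j _).1 hbij).2
    have hid := cramer (u i) (u j) (u k)
    have hupper : ∀ y ∈ B, ⟪y, u k⟫ ≤ ⟪b i, u k⟫ := by
      intro y hy
      have hy1 : ⟪y, u i⟫ ≤ h i := hle i y hy
      have hy2 : ⟪y, u j⟫ ≤ h j := hle j y hy
      have hidy := congrArg (fun w => ⟪y, w⟫) hid
      have hidb := congrArg (fun w => ⟪b i, w⟫) hid
      simp only [inner_add_right, real_inner_smul_right] at hidy hidb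
      nlinarith
    have hbk : ⟪b i, u k⟫ = h k := by
      apply le_antisymm (hle k _ hbiB)
      apply csSup_le (himgne k)
      rintro r ⟨y, hy, rfl⟩
      exact hupper y hy
    have hbik : b i ∈ fac k := (hfacmem k _).2 ⟨hbiB, hbk⟩
    have huki : u k ≠ u i := by
      intro he
      rw [he, hJu] at hik
      exact lt_irrefl 0 hik
    have := hL4 i j k hji huki hbij hbik
    rw [this, hJu] at hkj
    exact lt_irrefl 0 hkj
  have hdir : ∀ i j, u i = u j → a i = a j := by
    intro i j he
    have hfij : fac i = fac j := by rw [hfac i, hfac j, he]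
    have hhij : h i = h j := by simp only [hh]; rw [he]
    have hKij : K i = K j := by simp only [hK, hgg]; rw [he, hfij]
    have hsij : ss i = ss j := by simp only [hss]; rw [hKij]
    simp only [ha]; rw [he, hhij, hsij]
  refine ⟨a, ha_mem, hdir, ?_, ?_, ?_⟩
  · intro i x hx
    rw [hau i]
    exact hle i x hx
  · intro x hx
    apply hhalf
    intro i
    have := hx i
    rwa [hau i] at this
  · intro i
    obtain ⟨j, hne, hbij⟩ := hL3 i
    refine ⟨j, ?_, hpos5 i j hne hbij, hnb i j hne hbij⟩
    rw [← hba i]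
    exact hL2 i j hne hbij

def cE (x : E2) : ℂ := ⟨x 0, x 1⟩

lemma cE_abs {x : E2} (hx : ‖x‖ = 1) : ‖cE x‖ = 1 := by
  have h := unit_sq hx
  have hn : Complex.normSq (cE x) = 1 := by
    rw [Complex.normSq_apply]; show x 0 * x 0 + x 1 * x 1 = 1; nlinarith
  rw [Complex.norm_def, hn, Real.sqrt_one]

lemma cE_ne {x : E2} (hx : ‖x‖ = 1) : cE x ≠ 0 := by
  intro h
  have := cE_abs hx
  rw [h] at this
  simp at this

def targ (x : E2) : ℝ := Complex.arg (cE x)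

lemma targ_mem (x : E2) : targ x ∈ Set.Ioc (-Real.pi) Real.pi :=
  ⟨Complex.neg_pi_lt_arg _, Complex.arg_le_pi _⟩

lemma targ_inj {x y : E2} (hx : ‖x‖ = 1) (hy : ‖y‖ = 1) (h : targ x = targ y) : x = y := by
  have ex := Complex.norm_mul_cos_add_sin_mul_I (cE x)
  have ey := Complex.norm_mul_cos_add_sin_mul_I (cE y)
  rw [cE_abs hx] at ex
  rw [cE_abs hy] at ey
  have : cE x = cE y := by
    rw [← ex, ← ey]
    show (1:ℂ) * _ = (1:ℂ) * _
    rw [one_mul, one_mul]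
    unfold targ at h
    rw [h]
  refine PiLp.ext fun i => ?_
  fin_cases i
  · exact congrArg Complex.re this
  · exact congrArg Complex.im this

lemma sin_targ_sub {x y : E2} (hx : ‖x‖ = 1) (hy : ‖y‖ = 1) :
    Real.sin (targ y - targ x) = ⟪Jr x, y⟫ := by
  set z : ℂ := cE y * (starRingEnd ℂ) (cE x) with hz
  have hcx : cE x ≠ 0 := cE_ne hx
  have hcy : cE y ≠ 0 := cE_ne hy
  have hconj : (starRingEnd ℂ) (cE x) ≠ 0 := by
    simpa using hcx
  have habs : ‖z‖ = 1 := by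
    rw [hz, norm_mul, Complex.norm_conj, cE_abs hx, cE_abs hy, one_mul]
  have hang : ((targ y - targ x : ℝ) : Real.Angle) = (Complex.arg z : Real.Angle) := by
    rw [hz, Complex.arg_mul_coe_angle hcy hconj, Complex.arg_conj_coe_angle]
    show ((targ y : ℝ) - (targ x : ℝ) : ℝ) = (targ y : Real.Angle) + (-(targ x : Real.Angle))
    rw [sub_eq_add_neg]
    push_cast
    rfl
  calc Real.sin (targ y - targ x)
      = Real.Angle.sin ((targ y - targ x : ℝ) : Real.Angle) := (Real.Angle.sin_coe _).symm
  _ = Real.Angle.sin ((Complex.arg z : ℝ) : Real.Angle) := by rw [hang]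
  _ = Real.sin (Complex.arg z) := Real.Angle.sin_coe _
  _ = z.im / ‖z‖ := Complex.sin_arg z
  _ = z.im := by rw [habs, div_one]
  _ = ⟪Jr x, y⟫ := by
      rw [hz, Complex.mul_im]
      show (cE y).re * (-(cE x).im) + (cE y).im * (cE x).re = _
      show y 0 * (-(x 1)) + y 1 * x 0 = _
      rw [inner_E2]
      show _ = Jr x 0 * y 0 + Jr x 1 * y 1
      show _ = (-(x 1)) * y 0 + x 0 * y 1
      ring


lemma succ_unique {d : ℕ} {u : Fin d → E2} (hu : ∀ i, ‖u i‖ = 1) (i j j' : Fin d)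
    (h1 : 0 < ⟪Jr (u i), u j⟫)
    (h2 : ∀ k, ¬(0 < ⟪Jr (u i), u k⟫ ∧ 0 < ⟪Jr (u k), u j⟫))
    (h1' : 0 < ⟪Jr (u i), u j'⟫)
    (h2' : ∀ k, ¬(0 < ⟪Jr (u i), u k⟫ ∧ 0 < ⟪Jr (u k), u j'⟫)) :
    u j = u j' := by
  have e1 : ⟪Jr (u j'), u j⟫ ≤ 0 := by
    by_contra hcon
    push_neg at hcon
    exact h2 j' ⟨h1', hcon⟩
  have e2 : ⟪Jr (u j), u j'⟫ ≤ 0 := by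
    by_contra hcon
    push_neg at hcon
    exact h2' j ⟨h1, hcon⟩
  rw [inner_Jr_antisymm] at e1
  have hz : ⟪Jr (u j), u j'⟫ = 0 := le_antisymm e2 (by linarith)
  rcases unit_parallel (hu j) (hu j') hz with hcase | hcase
  · exact hcase.symm
  · exfalso
    rw [hcase, inner_neg_right] at h1'
    linarith

set_option maxHeartbeats 1000000 in
/-- Minkowski uniqueness in dimension 2: a convex polygon is determined up to
translation by its outward unit edge normals and edge lengths. -/
theorem stmt_13 {d : ℕ} (u : Fin d → EuclideanSpace ℝ (Fin 2)) (ν : Fin d → ℝ)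
    (hu : ∀ i, ‖u i‖ = 1) (hspan : Submodule.span ℝ (Set.range u) = ⊤)
    (hν : ∀ i, 0 < ν i) (hmink : ∑ i, ν i • u i = 0)
    (P Q : Set (EuclideanSpace ℝ (Fin 2)))
    (hPconv : Convex ℝ P) (hPcomp : IsCompact P) (hPint : (interior P).Nonempty)
    (hQconv : Convex ℝ Q) (hQcomp : IsCompact Q) (hQint : (interior Q).Nonempty)
    (facP facQ : Fin d → Set (EuclideanSpace ℝ (Fin 2)))
    (hfacP : ∀ i, facP i = {x ∈ P | ⟪x, u i⟫ = sSup ((fun y => ⟪y, u i⟫) '' P)})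
    (hfacQ : ∀ i, facQ i = {x ∈ Q | ⟪x, u i⟫ = sSup ((fun y => ⟪y, u i⟫) '' Q)})
    (hPbd : frontier P = ⋃ i, facP i) (hQbd : frontier Q = ⋃ i, facQ i)
    (hPlen : ∀ i, (μH[1] : Measure (EuclideanSpace ℝ (Fin 2))) (facP i) = ENNReal.ofReal (ν i))
    (hQlen : ∀ i, (μH[1] : Measure (EuclideanSpace ℝ (Fin 2))) (facQ i) = ENNReal.ofReal (ν i)) :
    ∃ v, Q = (fun x => x + v) '' P := by
  classical
  obtain ⟨aP, haPmem, haPdir, haPle, haPhalf, haPsucc⟩ :=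
    body_main u ν hu hν P hPconv hPcomp hPint facP hfacP hPbd hPlen
  obtain ⟨aQ, haQmem, haQdir, haQle, haQhalf, haQsucc⟩ :=
    body_main u ν hu hν Q hQconv hQcomp hQint facQ hfacQ hQbd hQlen
  set t : Fin d → ℝ := fun i => targ (u i) with ht
  have hbnd : ∀ i, t i ∈ Set.Ioc (-Real.pi) Real.pi := fun i => targ_mem _
  set next : Fin d → Fin d := fun i => Classical.choose (haPsucc i) with hnext
  have hnextspec : ∀ i, aP i + ν i • Jr (u i) = aP (next i) ∧
      0 < ⟪Jr (u i), u (next i)⟫ ∧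
      ∀ k, ¬(0 < ⟪Jr (u i), u k⟫ ∧ 0 < ⟪Jr (u k), u (next i)⟫) :=
    fun i => Classical.choose_spec (haPsucc i)
  have hsin : ∀ i k, Real.sin (t k - t i) = ⟪Jr (u i), u k⟫ :=
    fun i k => sin_targ_sub (hu i) (hu k)
  have h1 : ∀ i, 0 < Real.sin (t (next i) - t i) := by
    intro i; rw [hsin]; exact (hnextspec i).2.1
  have h2 : ∀ i k, ¬(0 < Real.sin (t k - t i) ∧ 0 < Real.sin (t (next i) - t k)) := by
    intro i k; rw [hsin, hsin]; exact (hnextspec i).2.2 k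
  set v : Fin d → E2 := fun i => aQ i - aP i with hv
  have hvnext : ∀ i, v (next i) = v i := by
    intro i
    obtain ⟨j', hj'1, hj'2, hj'3⟩ := haQsucc i
    have huu : u (next i) = u j' :=
      succ_unique hu i (next i) j' (hnextspec i).2.1 (hnextspec i).2.2 hj'2 hj'3
    have haQeq : aQ j' = aQ (next i) := haQdir j' (next i) huu.symm
    have e1 : aP (next i) = aP i + ν i • Jr (u i) := ((hnextspec i).1).symm
    have e2 : aQ (next i) = aQ i + ν i • Jr (u i) := by rw [← haQeq, ← hj'1]
    simp only [hv, e1, e2]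
    abel
  have hvt : ∀ i k, t i = t k → v i = v k := by
    intro i k he
    have huik : u i = u k := targ_inj (hu i) (hu k) he
    simp only [hv]
    rw [haQdir i k huik, haPdir i k huik]
  have hall := cyc_aux t hbnd next h1 h2 v hvnext hvt
  have hd : 0 < d := by
    rcases Nat.eq_zero_or_pos d with h0 | h
    · exfalso
      subst h0
      rw [Set.range_eq_empty u, Submodule.span_empty] at hspan
      exact absurd hspan bot_ne_top
    · exact h
  set i0 : Fin d := ⟨0, hd⟩ with hi0
  have hAQ : ∀ i, aQ i = aP i + v i0 := by
    intro i
    have h5 : aQ i - aP i = aQ i0 - aP i0 := by simpa [hv] using hall i0 i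
    simp only [hv]
    rw [sub_eq_iff_eq_add.mp h5]
    abel
  refine ⟨v i0, ?_⟩
  ext x
  constructor
  · intro hxQ
    refine ⟨x - v i0, ?_, sub_add_cancel x (v i0)⟩
    apply haPhalf
    intro i
    have h3 := haQle i x hxQ
    have h4 : ⟪aQ i, u i⟫ = ⟪aP i, u i⟫ + ⟪v i0, u i⟫ := by
      rw [hAQ i, inner_add_left]
    rw [inner_sub_left]
    linarith
  · rintro ⟨y, hyP, rfl⟩
    apply haQhalf
    intro i
    have h3 := haPle i y hyP
    have h4 : ⟪aQ i, u i⟫ = ⟪aP i, u i⟫ + ⟪v i0, u i⟫ := by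
      rw [hAQ i, inner_add_left]
    rw [inner_add_left]
    linarith

end MinkAux
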